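/- Let f(x,y) = 2xy, let ℓ(x,y) = u·x + v·y + w be an affine function on ℝ², and let T ⊆ ℝ² be the convex hull of three points p₁, p₂, p₃ ∈ ℝ². Then the maximum of the error |f(x,y) − ℓ(x,y)| over T is attained at some point of the union of the three closed segments [p₁,p₂] ∪ [p₂,p₃] ∪ [p₁,p₃]; in particular, it is never attained only in the interior of T. -/

import Mathlib

lemma mid {a b c x y z : ℝ} (ha : 0 ≤ a) (hb : 0 ≤ b) (hc : 0 ≤ c)
    (habc : a + b + c = 1) (h1 : x ≤ y) (h2 : x ≤ z) : x ≤ a*x + b*y + c*z := by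
  have hx : a*x + b*x + c*x = x := by linear_combination x*habc
  linarith [mul_nonneg hb (sub_nonneg.2 h1), mul_nonneg hc (sub_nonneg.2 h2)]

lemma mid' {a b c x y z : ℝ} (ha : 0 ≤ a) (hb : 0 ≤ b) (hc : 0 ≤ c)
    (habc : a + b + c = 1) (h1 : y ≤ x) (h2 : z ≤ x) : a*x + b*y + c*z ≤ x := by
  have hx : a*x + b*x + c*x = x := by linear_combination x*habc
  linarith [mul_nonneg hb (sub_nonneg.2 h1), mul_nonneg hc (sub_nonneg.2 h2)]

lemma aux1 (P Q M : ℝ×ℝ) (hPQ : P.2 = Q.2) (hM2 : M.2 = P.2)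
    (h1 : P.1 ≤ M.1) (h2 : M.1 ≤ Q.1) : M ∈ segment ℝ P Q := by
  obtain ⟨Px, Py⟩ := P
  obtain ⟨Qx, Qy⟩ := Q
  obtain ⟨Mx, My⟩ := M
  simp only at hPQ hM2 h1 h2
  subst hPQ hM2
  rcases eq_or_lt_of_le (le_trans h1 h2) with h | h
  · have : Mx = Px := le_antisymm (h ▸ h2) h1
    subst this
    exact left_mem_segment ℝ _ _
  · have hd : Qx - Px > 0 := by linarith
    refine ⟨1 - (Mx - Px) / (Qx - Px), (Mx - Px) / (Qx - Px),
      ?_, div_nonneg (by linarith) hd.le, by ring, ?_⟩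
    · have : (Mx - Px) / (Qx - Px) ≤ 1 := by rw [div_le_one hd]; linarith
      linarith
    · rw [Prod.ext_iff]
      constructor
      · simp only [Prod.fst_add, Prod.smul_fst, smul_eq_mul]
        field_simp
        ring
      · simp only [Prod.snd_add, Prod.smul_snd, smul_eq_mul]
        ring

lemma key (p₁ p₂ p₃ m : ℝ×ℝ) (a b c : ℝ) (ha : 0 ≤ a) (hb : 0 ≤ b) (hc : 0 ≤ c)
    (habc : a + b + c = 1) (hm : m = a•p₁+b•p₂+c•p₃)
    (h12 : p₁.2 ≤ p₂.2) (h23 : p₂.2 ≤ p₃.2) :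
    ∃ q₁ ∈ segment ℝ p₁ p₂ ∪ segment ℝ p₂ p₃ ∪ segment ℝ p₁ p₃,
    ∃ q₂ ∈ segment ℝ p₁ p₂ ∪ segment ℝ p₂ p₃ ∪ segment ℝ p₁ p₃,
      q₁.2 = q₂.2 ∧ m ∈ segment ℝ q₁ q₂ := by
  obtain ⟨x₁, y₁⟩ := p₁
  obtain ⟨x₂, y₂⟩ := p₂
  obtain ⟨x₃, y₃⟩ := p₃
  obtain ⟨mx, my⟩ := m
  simp only at h12 h23
  rw [Prod.ext_iff] at hm
  simp only [Prod.smul_mk, Prod.mk_add_mk, smul_eq_mul] at hm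
  obtain ⟨hmx, hmy⟩ := hm
  have hL : my - y₁ = b*(y₂-y₁) + c*(y₃-y₁) := by rw [hmy]; linear_combination y₁*habc
  have hU : y₃ - my = a*(y₃-y₁) + b*(y₃-y₂) := by rw [hmy]; linear_combination (-y₃)*habc
  have hb21 : 0 ≤ b*(y₂-y₁) := mul_nonneg hb (by linarith)
  have hc31 : 0 ≤ c*(y₃-y₁) := mul_nonneg hc (by linarith)
  have ha31 : 0 ≤ a*(y₃-y₁) := mul_nonneg ha (by linarith)
  have hb32 : 0 ≤ b*(y₃-y₂) := mul_nonneg hb (by linarith)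
  by_cases hD : y₁ = y₃
  · -- degenerate: all y equal; m lies on one of the edges
    have e2 : y₂ = y₁ := le_antisymm (hD ▸ h23) h12
    have hmy1 : my = y₁ := by rw [hmy]; linear_combination y₁*habc + b*e2 + c*hD.symm
    have hxlow : ∀ x : ℝ, x ≤ x₁ → x ≤ x₂ → x ≤ x₃ → x ≤ mx := by
      intro x hx1 hx2 hx3
      rw [hmx]
      have hx : a*x + b*x + c*x = x := by linear_combination x*habc
      linarith [mul_nonneg ha (sub_nonneg.2 hx1), mul_nonneg hb (sub_nonneg.2 hx2),
        mul_nonneg hc (sub_nonneg.2 hx3)]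
    have hxhigh : ∀ x : ℝ, x₁ ≤ x → x₂ ≤ x → x₃ ≤ x → mx ≤ x := by
      intro x hx1 hx2 hx3
      rw [hmx]
      have hx : a*x + b*x + c*x = x := by linear_combination x*habc
      linarith [mul_nonneg ha (sub_nonneg.2 hx1), mul_nonneg hb (sub_nonneg.2 hx2),
        mul_nonneg hc (sub_nonneg.2 hx3)]
    have hmE : ((mx, my) : ℝ×ℝ) ∈
        segment ℝ (x₁,y₁) (x₂,y₂) ∪ segment ℝ (x₂,y₂) (x₃,y₃) ∪ segment ℝ (x₁,y₁) (x₃,y₃) := by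
      rcases le_total x₁ x₂ with h₁|h₁ <;> rcases le_total x₂ x₃ with h₂|h₂ <;>
        rcases le_total x₁ x₃ with h₃|h₃
      · exact Or.inr (aux1 _ _ _ hD hmy1
          (hxlow x₁ le_rfl h₁ h₃) (hxhigh x₃ h₃ h₂ le_rfl))
      · exact Or.inr (aux1 _ _ _ hD hmy1
          (hxlow x₁ le_rfl h₁ (by linarith)) (hxhigh x₃ (by linarith) h₂ le_rfl))
      · exact Or.inl (Or.inl (aux1 _ _ _ e2.symm hmy1
          (hxlow x₁ le_rfl h₁ h₃) (hxhigh x₂ h₁ le_rfl h₂)))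
      · refine Or.inl (Or.inr ?_)
        rw [segment_symm]
        exact aux1 _ _ _ (e2.trans hD).symm (hmy1.trans hD)
          (hxlow x₃ h₃ h₂ le_rfl) (hxhigh x₂ h₁ le_rfl h₂)
      · exact Or.inl (Or.inr (aux1 _ _ _ (e2.trans hD) (hmy1.trans e2.symm)
          (hxlow x₂ h₁ le_rfl h₂) (hxhigh x₃ h₃ h₂ le_rfl)))
      · refine Or.inl (Or.inl ?_)
        rw [segment_symm]
        exact aux1 _ _ _ e2 (hmy1.trans e2.symm)
          (hxlow x₂ h₁ le_rfl h₂) (hxhigh x₁ le_rfl h₁ h₃)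
      · refine Or.inr ?_
        rw [segment_symm]
        exact aux1 _ _ _ hD.symm (hmy1.trans hD)
          (hxlow x₃ (by linarith) h₂ le_rfl) (hxhigh x₁ le_rfl h₁ (by linarith))
      · refine Or.inr ?_
        rw [segment_symm]
        exact aux1 _ _ _ hD.symm (hmy1.trans hD)
          (hxlow x₃ h₃ h₂ le_rfl) (hxhigh x₁ le_rfl h₁ h₃)
    exact ⟨_, hmE, _, hmE, rfl, left_mem_segment ℝ _ _⟩
  · have hy31 : y₁ < y₃ := lt_of_le_of_ne (h12.trans h23) hD
    rcases le_total my y₂ with hcase | hcase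
    · -- lower case
      rcases eq_or_lt_of_le (show y₁ ≤ my by linarith) with h0 | h0
      · -- my = y₁ : c = 0, m on edge p₁p₂
        have hc0 : c = 0 := by
          have h1 : c*(y₃-y₁) ≤ 0 := by linarith
          nlinarith
        have hmem : ((mx, my) : ℝ×ℝ) ∈ segment ℝ (x₁,y₁) (x₂,y₂) :=
          ⟨a, b, ha, hb, by linarith, by
            rw [Prod.ext_iff]
            constructor
            · simp only [Prod.fst_add, Prod.smul_fst, smul_eq_mul]
              rw [hmx]; linear_combination (-x₃)*hc0
            · simp only [Prod.snd_add, Prod.smul_snd, smul_eq_mul]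
              rw [hmy]; linear_combination (-y₃)*hc0⟩
        exact ⟨_, Or.inl (Or.inl hmem), _, Or.inl (Or.inl hmem), rfl, left_mem_segment ℝ _ _⟩
      · -- y₁ < my ≤ y₂
        have hy21 : y₁ < y₂ := lt_of_lt_of_le h0 hcase
        obtain ⟨t, ht⟩ : ∃ x : ℝ, x = (my-y₁)/(y₂-y₁) := ⟨_, rfl⟩
        obtain ⟨s, hs⟩ : ∃ x : ℝ, x = (my-y₁)/(y₃-y₁) := ⟨_, rfl⟩
        obtain ⟨μ, hμ⟩ : ∃ x : ℝ, x = b*(y₂-y₁)/(my-y₁) := ⟨_, rfl⟩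
        have hs0 : 0 ≤ s := by rw [hs]; exact div_nonneg (by linarith) (by linarith)
        have hs1 : s ≤ 1 := by rw [hs, div_le_one (by linarith)]; linarith
        have ht0 : 0 ≤ t := by rw [ht]; exact div_nonneg (by linarith) (by linarith)
        have ht1 : t ≤ 1 := by rw [ht, div_le_one (by linarith)]; linarith
        have hμ0 : 0 ≤ μ := by rw [hμ]; exact div_nonneg hb21 (by linarith)
        have hμ1 : μ ≤ 1 := by rw [hμ, div_le_one (by linarith)]; linarith
        have hq1 : ((1-s)*x₁+s*x₃, (1-s)*y₁+s*y₃) ∈ segment ℝ (x₁,y₁) (x₃,y₃) :=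
          ⟨1-s, s, by linarith, hs0, by ring, by
            rw [Prod.ext_iff]; constructor <;> simp⟩
        have hq2 : ((1-t)*x₁+t*x₂, (1-t)*y₁+t*y₂) ∈ segment ℝ (x₁,y₁) (x₂,y₂) :=
          ⟨1-t, t, by linarith, ht0, by ring, by
            rw [Prod.ext_iff]; constructor <;> simp⟩
        have h21 : y₂ - y₁ ≠ 0 := sub_ne_zero.2 hy21.ne'
        have h31 : y₃ - y₁ ≠ 0 := sub_ne_zero.2 hy31.ne'
        have h01 : my - y₁ ≠ 0 := sub_ne_zero.2 h0.ne'
        have hq1y : (1-s)*y₁+s*y₃ = my := by rw [hs]; field_simp; ring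
        have hq2y : (1-t)*y₁+t*y₂ = my := by rw [ht]; field_simp; ring
        have hμt : μ*t = b := by rw [hμ, ht]; field_simp
        have hμs : (1-μ)*s = c := by rw [hμ, hs]; field_simp; linear_combination hL
        refine ⟨_, Or.inr hq1, _, Or.inl (Or.inl hq2),
          show (1-s)*y₁+s*y₃ = (1-t)*y₁+t*y₂ from by rw [hq1y, hq2y], ?_⟩
        refine ⟨1-μ, μ, by linarith, hμ0, by ring, ?_⟩
        rw [Prod.ext_iff]
        constructor
        · simp only [Prod.fst_add, Prod.smul_fst, smul_eq_mul]
          linear_combination (x₂-x₁)*hμt + (x₃-x₁)*hμs - x₁*habc - hmx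
        · simp only [Prod.snd_add, Prod.smul_snd, smul_eq_mul]
          linear_combination (y₂-y₁)*hμt + (y₃-y₁)*hμs - y₁*habc - hmy
    · -- upper case
      rcases eq_or_lt_of_le (show my ≤ y₃ by linarith) with h0 | h0
      · -- my = y₃ : a = 0, m on edge p₂p₃
        have ha0 : a = 0 := by
          have h1 : a*(y₃-y₁) ≤ 0 := by linarith
          nlinarith
        have hmem : ((mx, my) : ℝ×ℝ) ∈ segment ℝ (x₂,y₂) (x₃,y₃) :=
          ⟨b, c, hb, hc, by linarith, by
            rw [Prod.ext_iff]
            constructor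
            · simp only [Prod.fst_add, Prod.smul_fst, smul_eq_mul]
              rw [hmx]; linear_combination (-x₁)*ha0
            · simp only [Prod.snd_add, Prod.smul_snd, smul_eq_mul]
              rw [hmy]; linear_combination (-y₁)*ha0⟩
        exact ⟨_, Or.inl (Or.inr hmem), _, Or.inl (Or.inr hmem), rfl, left_mem_segment ℝ _ _⟩
      · -- y₂ ≤ my < y₃
        have hy32 : y₂ < y₃ := lt_of_le_of_lt hcase h0
        obtain ⟨t, ht⟩ : ∃ x : ℝ, x = (y₃-my)/(y₃-y₂) := ⟨_, rfl⟩
        obtain ⟨s, hs⟩ : ∃ x : ℝ, x = (y₃-my)/(y₃-y₁) := ⟨_, rfl⟩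
        obtain ⟨μ, hμ⟩ : ∃ x : ℝ, x = b*(y₃-y₂)/(y₃-my) := ⟨_, rfl⟩
        have hs0 : 0 ≤ s := by rw [hs]; exact div_nonneg (by linarith) (by linarith)
        have hs1 : s ≤ 1 := by rw [hs, div_le_one (by linarith)]; linarith
        have ht0 : 0 ≤ t := by rw [ht]; exact div_nonneg (by linarith) (by linarith)
        have ht1 : t ≤ 1 := by rw [ht, div_le_one (by linarith)]; linarith
        have hμ0 : 0 ≤ μ := by rw [hμ]; exact div_nonneg hb32 (by linarith)
        have hμ1 : μ ≤ 1 := by rw [hμ, div_le_one (by linarith)]; linarith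
        have hq1 : (s*x₁+(1-s)*x₃, s*y₁+(1-s)*y₃) ∈ segment ℝ (x₁,y₁) (x₃,y₃) :=
          ⟨s, 1-s, hs0, by linarith, by ring, by
            rw [Prod.ext_iff]; constructor <;> simp⟩
        have hq2 : (t*x₂+(1-t)*x₃, t*y₂+(1-t)*y₃) ∈ segment ℝ (x₂,y₂) (x₃,y₃) :=
          ⟨t, 1-t, ht0, by linarith, by ring, by
            rw [Prod.ext_iff]; constructor <;> simp⟩
        have h32 : y₃ - y₂ ≠ 0 := sub_ne_zero.2 hy32.ne'
        have h31 : y₃ - y₁ ≠ 0 := sub_ne_zero.2 hy31.ne'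
        have h03 : y₃ - my ≠ 0 := sub_ne_zero.2 h0.ne'
        have hq1y : s*y₁+(1-s)*y₃ = my := by rw [hs]; field_simp; ring
        have hq2y : t*y₂+(1-t)*y₃ = my := by rw [ht]; field_simp; ring
        have hμt : μ*t = b := by rw [hμ, ht]; field_simp
        have hμs : (1-μ)*s = a := by rw [hμ, hs]; field_simp; linear_combination hU
        refine ⟨_, Or.inr hq1, _, Or.inl (Or.inr hq2),
          show s*y₁+(1-s)*y₃ = t*y₂+(1-t)*y₃ from by rw [hq1y, hq2y], ?_⟩
        refine ⟨1-μ, μ, by linarith, hμ0, by ring, ?_⟩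
        rw [Prod.ext_iff]
        constructor
        · simp only [Prod.fst_add, Prod.smul_fst, smul_eq_mul]
          linear_combination (x₂-x₃)*hμt + (x₁-x₃)*hμs - x₃*habc - hmx
        · simp only [Prod.snd_add, Prod.smul_snd, smul_eq_mul]
          linear_combination (y₂-y₃)*hμt + (y₁-y₃)*hμs - y₃*habc - hmy
lemma bary {p₁ p₂ p₃ m : ℝ×ℝ} (hm : m ∈ convexHull ℝ ({p₁,p₂,p₃} : Set (ℝ×ℝ))) :
    ∃ a b c : ℝ, 0 ≤ a ∧ 0 ≤ b ∧ 0 ≤ c ∧ a+b+c=1 ∧ m = a•p₁+b•p₂+c•p₃ := by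
  rw [show ({p₁,p₂,p₃} : Set (ℝ×ℝ)) = insert p₁ {p₂,p₃} from rfl,
    convexHull_insert ⟨p₂, by simp⟩, convexHull_pair, mem_convexJoin] at hm
  obtain ⟨x, hx, z, hz, hmz⟩ := hm
  rw [Set.mem_singleton_iff] at hx
  subst hx
  obtain ⟨β, γ, hβ, hγ, hβγ, rfl⟩ := hz
  obtain ⟨δ, ε, hδ, hε, hδε, rfl⟩ := hmz
  refine ⟨δ, ε*β, ε*γ, hδ, by positivity, by positivity, by nlinarith, ?_⟩
  module

lemma aux2 (u v w : ℝ) (q₁ q₂ m : ℝ×ℝ) (hq : q₁.2 = q₂.2) (hm : m ∈ segment ℝ q₁ q₂) :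
    |2*m.1*m.2 - (u*m.1 + v*m.2 + w)| ≤
      max |2*q₁.1*q₁.2 - (u*q₁.1 + v*q₁.2 + w)| |2*q₂.1*q₂.2 - (u*q₂.1 + v*q₂.2 + w)| := by
  obtain ⟨α, β, hα, hβ, hαβ, rfl⟩ := hm
  obtain ⟨a₁, a₂⟩ := q₁
  obtain ⟨b₁, b₂⟩ := q₂
  simp only at hq ⊢
  subst hq
  have hβ' : β = 1 - α := by linarith
  subst hβ'
  simp only [Prod.smul_mk, Prod.mk_add_mk, smul_eq_mul]
  set A := 2*a₁*a₂ - (u*a₁ + v*a₂ + w) with hA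
  set B := 2*b₁*a₂ - (u*b₁ + v*a₂ + w) with hB
  have hg : 2*(α*a₁+(1-α)*b₁)*(α*a₂+(1-α)*a₂) - (u*(α*a₁+(1-α)*b₁) + v*(α*a₂+(1-α)*a₂) + w)
      = α*A + (1-α)*B := by rw [hA, hB]; ring
  rw [hg]
  calc |α*A + (1-α)*B| ≤ |α*A| + |(1-α)*B| := abs_add_le _ _
    _ = α*|A| + (1-α)*|B| := by
        rw [abs_mul, abs_mul, abs_of_nonneg hα, abs_of_nonneg (show (0:ℝ) ≤ 1 - α from by linarith)]
    _ ≤ max |A| |B| := by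
        have h1 : |A| ≤ max |A| |B| := le_max_left _ _
        have h2 : |B| ≤ max |A| |B| := le_max_right _ _
        nlinarith

/-- The maximum vertical error between the saddle f(x,y) = 2xy and an affine function
ℓ(x,y) = ux + vy + w over a triangle T is attained on the union of the three edges;
in particular it is never attained only in the interior of T. -/
theorem stmt_3 (u v w : ℝ) (p₁ p₂ p₃ : ℝ × ℝ) :
    ∃ q ∈ segment ℝ p₁ p₂ ∪ segment ℝ p₂ p₃ ∪ segment ℝ p₁ p₃,
      ∀ r ∈ convexHull ℝ ({p₁, p₂, p₃} : Set (ℝ × ℝ)),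
        |2*r.1*r.2 - (u*r.1 + v*r.2 + w)| ≤ |2*q.1*q.2 - (u*q.1 + v*q.2 + w)| := by
  have hcomp : IsCompact (convexHull ℝ ({p₁,p₂,p₃} : Set (ℝ×ℝ))) :=
    (Set.toFinite _).isCompact_convexHull ℝ
  have hne : (convexHull ℝ ({p₁,p₂,p₃} : Set (ℝ×ℝ))).Nonempty :=
    ⟨p₁, subset_convexHull ℝ _ (by simp)⟩
  have hcont : Continuous fun r : ℝ×ℝ => |2*r.1*r.2 - (u*r.1 + v*r.2 + w)| := by
    apply Continuous.abs
    fun_prop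
  obtain ⟨mpt, hmm, hmax⟩ := hcomp.exists_isMaxOn hne hcont.continuousOn
  obtain ⟨a, b, c, ha, hb, hc, habc, hmeq⟩ := bary hmm
  have step : ∃ q₁ ∈ segment ℝ p₁ p₂ ∪ segment ℝ p₂ p₃ ∪ segment ℝ p₁ p₃,
      ∃ q₂ ∈ segment ℝ p₁ p₂ ∪ segment ℝ p₂ p₃ ∪ segment ℝ p₁ p₃,
      q₁.2 = q₂.2 ∧ mpt ∈ segment ℝ q₁ q₂ := by
    rcases le_total p₁.2 p₂.2 with h₁|h₁
    · rcases le_total p₂.2 p₃.2 with h₂|h₂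
      · exact key p₁ p₂ p₃ mpt a b c ha hb hc habc hmeq h₁ h₂
      · rcases le_total p₁.2 p₃.2 with h₃|h₃
        · obtain ⟨q₁, hq₁, q₂, hq₂, hqy, hseg⟩ :=
            key p₁ p₃ p₂ mpt a c b ha hc hb (by linarith) (by rw [hmeq]; module) h₃ h₂
          have hEE : segment ℝ p₁ p₃ ∪ segment ℝ p₃ p₂ ∪ segment ℝ p₁ p₂
              = segment ℝ p₁ p₂ ∪ segment ℝ p₂ p₃ ∪ segment ℝ p₁ p₃ := by
            rw [segment_symm ℝ p₃ p₂]; ac_rfl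
          exact ⟨q₁, hEE ▸ hq₁, q₂, hEE ▸ hq₂, hqy, hseg⟩
        · obtain ⟨q₁, hq₁, q₂, hq₂, hqy, hseg⟩ :=
            key p₃ p₁ p₂ mpt c a b hc ha hb (by linarith) (by rw [hmeq]; module) h₃ h₁
          have hEE : segment ℝ p₃ p₁ ∪ segment ℝ p₁ p₂ ∪ segment ℝ p₃ p₂
              = segment ℝ p₁ p₂ ∪ segment ℝ p₂ p₃ ∪ segment ℝ p₁ p₃ := by
            rw [segment_symm ℝ p₃ p₁, segment_symm ℝ p₃ p₂]; ac_rfl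
          exact ⟨q₁, hEE ▸ hq₁, q₂, hEE ▸ hq₂, hqy, hseg⟩
    · rcases le_total p₂.2 p₃.2 with h₂|h₂
      · rcases le_total p₁.2 p₃.2 with h₃|h₃
        · obtain ⟨q₁, hq₁, q₂, hq₂, hqy, hseg⟩ :=
            key p₂ p₁ p₃ mpt b a c hb ha hc (by linarith) (by rw [hmeq]; module) h₁ h₃
          have hEE : segment ℝ p₂ p₁ ∪ segment ℝ p₁ p₃ ∪ segment ℝ p₂ p₃
              = segment ℝ p₁ p₂ ∪ segment ℝ p₂ p₃ ∪ segment ℝ p₁ p₃ := by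
            rw [segment_symm ℝ p₂ p₁]; ac_rfl
          exact ⟨q₁, hEE ▸ hq₁, q₂, hEE ▸ hq₂, hqy, hseg⟩
        · obtain ⟨q₁, hq₁, q₂, hq₂, hqy, hseg⟩ :=
            key p₂ p₃ p₁ mpt b c a hb hc ha (by linarith) (by rw [hmeq]; module) h₂ h₃
          have hEE : segment ℝ p₂ p₃ ∪ segment ℝ p₃ p₁ ∪ segment ℝ p₂ p₁
              = segment ℝ p₁ p₂ ∪ segment ℝ p₂ p₃ ∪ segment ℝ p₁ p₃ := by
            rw [segment_symm ℝ p₃ p₁, segment_symm ℝ p₂ p₁]; ac_rfl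
          exact ⟨q₁, hEE ▸ hq₁, q₂, hEE ▸ hq₂, hqy, hseg⟩
      · obtain ⟨q₁, hq₁, q₂, hq₂, hqy, hseg⟩ :=
          key p₃ p₂ p₁ mpt c b a hc hb ha (by linarith) (by rw [hmeq]; module) h₂ h₁
        have hEE : segment ℝ p₃ p₂ ∪ segment ℝ p₂ p₁ ∪ segment ℝ p₃ p₁
            = segment ℝ p₁ p₂ ∪ segment ℝ p₂ p₃ ∪ segment ℝ p₁ p₃ := by
          rw [segment_symm ℝ p₃ p₂, segment_symm ℝ p₂ p₁, segment_symm ℝ p₃ p₁]; ac_rfl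
        exact ⟨q₁, hEE ▸ hq₁, q₂, hEE ▸ hq₂, hqy, hseg⟩
  obtain ⟨q₁, hq₁E, q₂, hq₂E, hqy, hseg⟩ := step
  have h2 := aux2 u v w q₁ q₂ mpt hqy hseg
  rcases le_total (|2*q₁.1*q₁.2 - (u*q₁.1 + v*q₁.2 + w)|)
      (|2*q₂.1*q₂.2 - (u*q₂.1 + v*q₂.2 + w)|) with hle|hle
  · rw [max_eq_right hle] at h2
    exact ⟨q₂, hq₂E, fun r hr => (hmax hr).trans h2⟩
  · rw [max_eq_left hle] at h2
    exact ⟨q₁, hq₁E, fun r hr => (hmax hr).trans h2⟩
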